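/- arXiv:2205.08773 — 2 statements merged into one kernel-verified Lean document; each statement's English description precedes it below -/
import Mathlib

section
/- There is a weaker version: ∑_{n ≤ x} φ(n) = (3/π²)x² + O(x log x) as x → ∞. -/
open Filter Finset Real ArithmeticFunction
open scoped ArithmeticFunction.Moebius ArithmeticFunction.zeta


lemma mu_bound (n : ℕ) : ‖(μ n : ℝ) / (n : ℝ) ^ 2‖ ≤ 1 / (n : ℝ) ^ 2 := by
  have h1 : ‖((μ n : ℤ) : ℝ)‖ ≤ 1 := by
    rw [Real.norm_eq_abs, ← Int.cast_abs]
    exact_mod_cast (abs_moebius_le_one (n := n))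
  rcases Nat.eq_zero_or_pos n with rfl | hn
  · simp
  · rw [norm_div, Real.norm_eq_abs (((n : ℝ))^2), abs_of_nonneg (by positivity)]
    gcongr

lemma mu_summable : Summable (fun n : ℕ => (μ n : ℝ) / (n : ℝ) ^ 2) :=
  Summable.of_norm_bounded ((Real.summable_one_div_nat_pow (p := 2)).mpr one_lt_two) mu_bound

lemma mu_tsum : ∑' n : ℕ, (μ n : ℝ) / (n : ℝ) ^ 2 = 6 / π ^ 2 := by
  have hπ : ((π : ℂ)) ^ 2 ≠ 0 := pow_ne_zero _ (by exact_mod_cast Real.pi_ne_zero)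
  have hz : riemannZeta 2 = (π : ℂ) ^ 2 / 6 := riemannZeta_two
  have h1 : LSeries (fun n => ((ζ : ArithmeticFunction ℕ) n : ℂ)) 2 *
      LSeries (fun n => ((μ n : ℤ) : ℂ)) 2 = 1 :=
    LSeries_zeta_mul_Lseries_moebius (by norm_num)
  have hze : LSeries (fun n => ((ζ : ArithmeticFunction ℕ) n : ℂ)) 2 = riemannZeta 2 :=
    LSeries_zeta_eq_riemannZeta (by norm_num)
  rw [hze, hz] at h1
  have hterm : ∀ n : ℕ, LSeries.term (fun n => ((μ n : ℤ) : ℂ)) 2 n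
      = ((( (μ n : ℝ)) / (n : ℝ) ^ 2 : ℝ) : ℂ) := by
    intro n
    rcases Nat.eq_zero_or_pos n with rfl | hn
    · simp [LSeries.term]
    · rw [LSeries.term_of_ne_zero hn.ne']
      rw [show ((2 : ℂ)) = ((2 : ℕ) : ℂ) by norm_num, Complex.cpow_natCast]
      push_cast
      ring
  have hL : LSeries (fun n => ((μ n : ℤ) : ℂ)) 2
      = ((∑' n : ℕ, (μ n : ℝ) / (n : ℝ) ^ 2 : ℝ) : ℂ) := by
    rw [LSeries]
    rw [show (fun n => LSeries.term (fun n => ((μ n : ℤ) : ℂ)) 2 n)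
        = fun n => (((μ n : ℝ) / (n : ℝ) ^ 2 : ℝ) : ℂ) from funext hterm]
    exact (Complex.ofReal_tsum _).symm
  rw [hL] at h1
  have key : ((∑' n : ℕ, (μ n : ℝ) / (n : ℝ) ^ 2 : ℝ) : ℂ) = ((6 / π ^ 2 : ℝ) : ℂ) := by
    rw [Complex.ofReal_div, Complex.ofReal_pow]
    rw [eq_div_iff hπ]
    push_cast at h1 ⊢
    linear_combination h1 * 6
  exact_mod_cast key

lemma totient_eq_sum (n : ℕ) (hn : 0 < n) :
    (Nat.totient n : ℝ) = ∑ x ∈ n.divisorsAntidiagonal, (μ x.1 : ℝ) * x.2 := by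
  have := (sum_eq_iff_sum_mul_moebius_eq (R := ℝ)
    (f := fun d => (Nat.totient d : ℝ)) (g := fun n => (n : ℝ))).mp ?_ n hn
  · exact this.symm
  · intro m hm
    rw [← Nat.cast_sum]
    exact_mod_cast congrArg (Nat.cast (R := ℝ)) (Nat.sum_totient m)

lemma swap_sum (N : ℕ) (F : ℕ × ℕ → ℝ) :
    ∑ n ∈ Icc 1 N, ∑ x ∈ n.divisorsAntidiagonal, F x
      = ∑ d ∈ Icc 1 N, ∑ q ∈ Icc 1 (N / d), F (d, q) := by
  have hL : ∑ n ∈ Icc 1 N, ∑ x ∈ n.divisorsAntidiagonal, F x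
      = ∑ x ∈ (Icc 1 N).biUnion (fun n => n.divisorsAntidiagonal), F x := by
    rw [Finset.sum_biUnion]
    intro a ha b hb hab
    simp only [Finset.disjoint_left]
    intro x hxa hxb
    rw [Nat.mem_divisorsAntidiagonal] at hxa hxb
    exact hab (hxa.1 ▸ hxb.1)
  have hR : ∑ d ∈ Icc 1 N, ∑ q ∈ Icc 1 (N / d), F (d, q)
      = ∑ x ∈ (Icc 1 N).biUnion (fun d => {d} ×ˢ Icc 1 (N / d)), F x := by
    rw [Finset.sum_biUnion]
    · refine Finset.sum_congr rfl fun d _ => ?_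
      rw [Finset.sum_product]
      simp
    · intro a ha b hb hab
      simp only [Finset.disjoint_left]
      intro x hxa hxb
      simp only [Finset.mem_product, Finset.mem_singleton] at hxa hxb
      exact hab (hxa.1 ▸ hxb.1)
  rw [hL, hR]
  congr 1
  ext ⟨a, b⟩
  simp only [Finset.mem_biUnion, Finset.mem_Icc, Nat.mem_divisorsAntidiagonal,
    Finset.mem_product, Finset.mem_singleton]
  constructor
  · rintro ⟨n, ⟨hn1, hnN⟩, hab, hn0⟩
    subst hab
    have ha : 0 < a := Nat.pos_of_ne_zero (by rintro rfl; simp at hn1)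
    have hb : 0 < b := Nat.pos_of_ne_zero (by rintro rfl; simp at hn1)
    refine ⟨a, ⟨ha, le_trans (Nat.le_mul_of_pos_right a hb) hnN⟩, rfl, hb, ?_⟩
    exact (Nat.le_div_iff_mul_le ha).mpr (le_trans (le_of_eq (Nat.mul_comm b a)) hnN)
  · rintro ⟨d, ⟨hd1, hdN⟩, rfl, hq1, hqN⟩
    have hab : a * b ≤ N := by
      have := (Nat.le_div_iff_mul_le (show 0 < a by omega)).mp hqN
      calc a * b = b * a := Nat.mul_comm a b
      _ ≤ N := this
    exact ⟨a * b, ⟨Nat.one_le_iff_ne_zero.mpr (by positivity), hab⟩, rfl, by positivity⟩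

lemma gauss_sum (M : ℕ) : ∑ q ∈ Icc 1 M, (q : ℝ) = M * (M + 1) / 2 := by
  induction M with
  | zero => simp
  | succ m ih =>
    rw [Finset.sum_Icc_succ_top (by omega), ih]
    push_cast
    ring

lemma S_eq (N : ℕ) : ∑ n ∈ Icc 1 N, (Nat.totient n : ℝ)
    = ∑ d ∈ Icc 1 N, (μ d : ℝ) * ((N / d : ℕ) * ((N / d : ℕ) + 1) / 2) := by
  rw [Finset.sum_congr rfl fun n hn => totient_eq_sum n (by simp at hn; omega),
    swap_sum N (fun x => (μ x.1 : ℝ) * x.2)]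
  refine Finset.sum_congr rfl fun d _ => ?_
  simp only []
  rw [show (∑ q ∈ Icc 1 (N / d), (μ (d, q).1 : ℝ) * ((d, q).2 : ℝ))
      = (μ d : ℝ) * ∑ q ∈ Icc 1 (N / d), (q : ℝ) from by rw [Finset.mul_sum],
    gauss_sum]

lemma harmonic_bound (N : ℕ) : ∑ d ∈ Icc 1 N, (1 : ℝ) / d ≤ 1 + Real.log N := by
  have h1 := harmonic_le_one_add_log N
  have h2 : ((harmonic N : ℚ) : ℝ) = ∑ d ∈ Icc 1 N, (1 : ℝ) / d := by
    rw [harmonic_eq_sum_Icc]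
    push_cast
    simp [one_div]
  linarith [h2 ▸ h1]

lemma inv_sq_tail (N : ℕ) (hN : 1 ≤ N) :
    ∑' k : ℕ, 1 / ((k + (N + 1) : ℕ) : ℝ) ^ 2 ≤ 1 / (N : ℝ) := by
  have hsum : Summable (fun k : ℕ => 1 / ((k + (N + 1) : ℕ) : ℝ) ^ 2) := by
    exact_mod_cast ((Real.summable_one_div_nat_pow (p := 2)).mpr one_lt_two).comp_injective
      (add_left_injective (N + 1))
  refine Summable.tsum_le_of_sum_le hsum fun s => ?_
  obtain ⟨m, hm⟩ : ∃ m, s ⊆ Finset.range m := ⟨(s.sup _root_.id) + 1, fun x hx =>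
    Finset.mem_range.mpr (Nat.lt_succ_of_le (Finset.le_sup (f := _root_.id) hx))⟩
  calc ∑ k ∈ s, 1 / ((k + (N + 1) : ℕ) : ℝ) ^ 2
      ≤ ∑ k ∈ Finset.range m, 1 / ((k + (N + 1) : ℕ) : ℝ) ^ 2 := by
        apply Finset.sum_le_sum_of_subset_of_nonneg hm
        intro i _ _; positivity
    _ = ∑ i ∈ Finset.Ioc N (N + m), ((i : ℝ) ^ 2)⁻¹ := by
        rw [show Finset.Ioc N (N + m) = Finset.Ico (N + 1) (N + m + 1) by
          ext i; simp [Nat.lt_succ_iff]]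
        rw [Finset.sum_Ico_eq_sum_range]
        simp only [one_div]
        refine Finset.sum_congr (by congr 1; omega) fun k _ => ?_
        push_cast
        ring
    _ ≤ (N : ℝ)⁻¹ - ((N + m : ℕ) : ℝ)⁻¹ := by
        rcases Nat.eq_zero_or_pos m with rfl | hm0
        · simp
        · exact_mod_cast sum_Ioc_inv_sq_le_sub (by omega) (by omega)
    _ ≤ 1 / (N : ℝ) := by
        rw [one_div]
        simp only [tsub_le_iff_right, le_add_iff_nonneg_right]
        positivity

lemma tail_bound (N : ℕ) (hN : 1 ≤ N) :
    |(∑' d : ℕ, (μ d : ℝ) / (d : ℝ) ^ 2) - ∑ d ∈ Icc 1 N, (μ d : ℝ) / (d : ℝ) ^ 2| ≤ 1 / N := by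
  have hr : Finset.range (N + 1) = insert 0 (Icc 1 N) := by ext i; simp; omega
  have h0 : ∑ d ∈ Finset.range (N + 1), (μ d : ℝ) / (d : ℝ) ^ 2
      = ∑ d ∈ Icc 1 N, (μ d : ℝ) / (d : ℝ) ^ 2 := by
    rw [hr, Finset.sum_insert (by simp)]
    simp
  have htail := Summable.sum_add_tsum_nat_add (f := fun n : ℕ => (μ n : ℝ) / (n : ℝ) ^ 2) (N + 1) mu_summable
  rw [← h0, show (∑' d : ℕ, (μ d : ℝ) / (d : ℝ) ^ 2)
      - ∑ d ∈ Finset.range (N + 1), (μ d : ℝ) / (d : ℝ) ^ 2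
      = ∑' k : ℕ, (μ (k + (N + 1)) : ℝ) / ((k + (N + 1) : ℕ) : ℝ) ^ 2 by
        push_cast at htail ⊢; linarith]
  calc |∑' k : ℕ, (μ (k + (N + 1)) : ℝ) / ((k + (N + 1) : ℕ) : ℝ) ^ 2|
      ≤ ∑' k : ℕ, 1 / ((k + (N + 1) : ℕ) : ℝ) ^ 2 := by
        rw [← Real.norm_eq_abs]
        refine (norm_tsum_le_tsum_norm ?_).trans (Summable.tsum_le_tsum (fun k => mu_bound _) ?_ ?_)
        · exact (mu_summable.comp_injective (add_left_injective (N + 1))).norm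
        · exact (mu_summable.comp_injective (add_left_injective (N + 1))).norm
        · exact_mod_cast ((Real.summable_one_div_nat_pow (p := 2)).mpr one_lt_two).comp_injective
            (add_left_injective (N + 1))
    _ ≤ 1 / N := inv_sq_tail N hN

lemma key_est (N : ℕ) (hN : 1 ≤ N) :
    |(∑ n ∈ Icc 1 N, (Nat.totient n : ℝ)) - 3 / π ^ 2 * (N : ℝ) ^ 2|
      ≤ 2 * N * (1 + Real.log N) := by
  have hNR : (1 : ℝ) ≤ N := by exact_mod_cast hN
  have hL0 : 0 ≤ Real.log N := Real.log_nonneg hNR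
  set K : ℝ := ∑' d : ℕ, (μ d : ℝ) / (d : ℝ) ^ 2 with hKdef
  set P : ℝ := ∑ d ∈ Icc 1 N, (μ d : ℝ) / (d : ℝ) ^ 2 with hPdef
  set A : ℝ := ∑ d ∈ Icc 1 N, (μ d : ℝ) * ((N / d : ℕ) : ℝ) ^ 2 with hAdef
  set B : ℝ := ∑ d ∈ Icc 1 N, (μ d : ℝ) * ((N / d : ℕ) : ℝ) with hBdef
  -- basic floor facts
  have hfloor : ∀ d ∈ Icc 1 N, ((N / d : ℕ) : ℝ) ≤ (N : ℝ) / d ∧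
      (N : ℝ) / d < ((N / d : ℕ) : ℝ) + 1 := by
    intro d hd
    simp only [Finset.mem_Icc] at hd
    have hd0 : (0 : ℝ) < d := by exact_mod_cast hd.1
    constructor
    · rw [le_div_iff₀ hd0]
      exact_mod_cast Nat.div_mul_le_self N d
    · rw [div_lt_iff₀ hd0]
      have hlt : N < (N / d + 1) * d := by
        have h := Nat.div_add_mod N d
        have h2 := Nat.mod_lt N (show 0 < d by omega)
        calc N = d * (N / d) + N % d := h.symm
          _ < d * (N / d) + d := by omega
          _ = (N / d + 1) * d := by ring
      exact_mod_cast hlt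
  have h3 : 3 / π ^ 2 * (N : ℝ) ^ 2 = K * N ^ 2 / 2 := by
    rw [hKdef, mu_tsum]; ring
  have hS : (∑ n ∈ Icc 1 N, (Nat.totient n : ℝ)) = (A + B) / 2 := by
    rw [S_eq, hAdef, hBdef, ← Finset.sum_add_distrib, Finset.sum_div]
    exact Finset.sum_congr rfl fun d _ => by ring
  have hA : |A - (N : ℝ) ^ 2 * P| ≤ 2 * N * (1 + Real.log N) := by
    rw [hAdef, hPdef, Finset.mul_sum, ← Finset.sum_sub_distrib]
    calc |∑ d ∈ Icc 1 N, ((μ d : ℝ) * ((N / d : ℕ) : ℝ) ^ 2 - (N:ℝ)^2 * ((μ d : ℝ) / d ^ 2))|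
        ≤ ∑ d ∈ Icc 1 N, |(μ d : ℝ) * ((N / d : ℕ) : ℝ) ^ 2 - (N:ℝ)^2 * ((μ d : ℝ) / d ^ 2)| :=
          Finset.abs_sum_le_sum_abs _ _
      _ ≤ ∑ d ∈ Icc 1 N, 2 * (N:ℝ) * (1 / (d:ℝ)) := by
          refine Finset.sum_le_sum fun d hd => ?_
          obtain ⟨h1, h2⟩ := hfloor d hd
          simp only [Finset.mem_Icc] at hd
          have hd0 : (0 : ℝ) < d := by exact_mod_cast hd.1
          have hmu : |(μ d : ℝ)| ≤ 1 := by
            rw [← Int.cast_abs]; exact_mod_cast abs_moebius_le_one (n := d)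
          have hrw : (N:ℝ)^2 * ((μ d : ℝ) / d ^ 2) = (μ d : ℝ) * ((N:ℝ)/d)^2 := by
            field_simp
          rw [hrw, ← mul_sub, abs_mul]
          have hm0 : (0:ℝ) ≤ ((N / d : ℕ) : ℝ) := by positivity
          have habs : |((N / d : ℕ) : ℝ) ^ 2 - ((N:ℝ)/d)^2| ≤ 2 * ((N:ℝ)/d) := by
            rw [abs_le]
            constructor <;> nlinarith
          calc |(μ d : ℝ)| * |((N / d : ℕ) : ℝ) ^ 2 - ((N:ℝ)/d)^2|
              ≤ 1 * (2 * ((N:ℝ)/d)) := by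
                apply mul_le_mul hmu habs (abs_nonneg _) zero_le_one
            _ = 2 * N * (1 / d) := by ring
      _ = 2 * (N:ℝ) * ∑ d ∈ Icc 1 N, (1:ℝ) / d := by rw [← Finset.mul_sum]
      _ ≤ 2 * (N:ℝ) * (1 + Real.log N) := by
          have := harmonic_bound N
          nlinarith
  have hB : |B| ≤ (N:ℝ) * (1 + Real.log N) := by
    rw [hBdef]
    calc |∑ d ∈ Icc 1 N, (μ d : ℝ) * ((N / d : ℕ) : ℝ)|
        ≤ ∑ d ∈ Icc 1 N, |(μ d : ℝ) * ((N / d : ℕ) : ℝ)| := Finset.abs_sum_le_sum_abs _ _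
      _ ≤ ∑ d ∈ Icc 1 N, (N : ℝ) * (1 / (d:ℝ)) := by
          refine Finset.sum_le_sum fun d hd => ?_
          obtain ⟨h1, _⟩ := hfloor d hd
          simp only [Finset.mem_Icc] at hd
          have hd0 : (0 : ℝ) < d := by exact_mod_cast hd.1
          have hmu : |(μ d : ℝ)| ≤ 1 := by
            rw [← Int.cast_abs]; exact_mod_cast abs_moebius_le_one (n := d)
          rw [abs_mul, abs_of_nonneg (show (0:ℝ) ≤ ((N / d : ℕ) : ℝ) by positivity)]
          calc |(μ d : ℝ)| * ((N / d : ℕ) : ℝ) ≤ 1 * ((N:ℝ)/d) := by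
                apply mul_le_mul hmu h1 (by positivity) zero_le_one
            _ = (N:ℝ) * (1/d) := by ring
      _ = (N : ℝ) * ∑ d ∈ Icc 1 N, (1:ℝ) / d := by rw [← Finset.mul_sum]
      _ ≤ (N:ℝ) * (1 + Real.log N) := by
          have := harmonic_bound N
          nlinarith
  have hP : |P - K| ≤ 1 / N := by
    rw [abs_sub_comm]; exact tail_bound N hN
  have hNpos : (0:ℝ) < N := by linarith
  have hN2P : |(N:ℝ)^2 * (P - K)| ≤ (N:ℝ) := by
    rw [abs_mul, abs_of_nonneg (by positivity : (0:ℝ) ≤ (N:ℝ)^2)]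
    calc (N:ℝ)^2 * |P - K| ≤ (N:ℝ)^2 * (1/(N:ℝ)) := by
          apply mul_le_mul_of_nonneg_left hP (by positivity)
      _ = (N:ℝ) := by field_simp
  rw [hS, h3]
  have hdecomp : (A + B) / 2 - K * N ^ 2 / 2
      = ((A - (N:ℝ)^2 * P) + (N:ℝ)^2 * (P - K) + B) / 2 := by ring
  rw [hdecomp, abs_div, abs_of_nonneg (by norm_num : (0:ℝ) ≤ 2)]
  have := abs_add_le ((A - (N:ℝ)^2 * P) + (N:ℝ)^2 * (P - K)) B
  have := abs_add_le (A - (N:ℝ)^2 * P) ((N:ℝ)^2 * (P - K))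
  nlinarith

/-- Weaker version: `∑_{n ≤ x} φ(n) = (3/π²) x² + O(x log x)` as `x → ∞`. -/
theorem sum_totient_asymptotic_weak :
    (fun x : ℝ => (∑ n ∈ Finset.Icc 1 ⌊x⌋₊, (Nat.totient n : ℝ)) - 3 / π ^ 2 * x ^ 2)
    =O[atTop] fun x : ℝ => x * Real.log x := by
  rw [Asymptotics.isBigO_iff]
  refine ⟨10, ?_⟩
  filter_upwards [eventually_ge_atTop (8 : ℝ)] with x hx
  have hx0 : (0:ℝ) < x := by linarith
  set N := ⌊x⌋₊ with hNdef
  have hN1 : 1 ≤ N := by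
    rw [hNdef]
    exact Nat.le_floor (by norm_num; linarith)
  have hNx : (N : ℝ) ≤ x := Nat.floor_le hx0.le
  have hxN : x < (N : ℝ) + 1 := Nat.lt_floor_add_one x
  have hNR : (1:ℝ) ≤ N := by exact_mod_cast hN1
  have hlogx : 2 ≤ Real.log x := by
    have h8 : Real.log 8 ≤ Real.log x := Real.log_le_log (by norm_num) hx
    have : Real.log 8 = 3 * Real.log 2 := by
      rw [show (8:ℝ) = 2 ^ 3 by norm_num, Real.log_pow]; push_cast; ring
    nlinarith [Real.log_two_gt_d9]
  have hlogN : Real.log N ≤ Real.log x := Real.log_le_log (by linarith) hNx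
  have hlogN0 : 0 ≤ Real.log N := Real.log_nonneg hNR
  have hkey := key_est N hN1
  have hπ : (3:ℝ) ≤ π := Real.pi_gt_three.le
  have hπ2 : (0:ℝ) < π ^ 2 := by positivity
  have hfrac : 3 / π ^ 2 ≤ 1 := by
    rw [div_le_one hπ2]; nlinarith
  have hfrac0 : 0 < 3 / π ^ 2 := by positivity
  have hsq : x ^ 2 - (N:ℝ) ^ 2 ≤ 2 * x := by nlinarith
  have hsq0 : 0 ≤ x ^ 2 - (N:ℝ) ^ 2 := by nlinarith
  have hmain : |(∑ n ∈ Finset.Icc 1 N, (Nat.totient n : ℝ)) - 3 / π ^ 2 * x ^ 2|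
      ≤ 2 * N * (1 + Real.log N) + 3 / π ^ 2 * (x ^ 2 - (N:ℝ) ^ 2) := by
    have hd : (∑ n ∈ Finset.Icc 1 N, (Nat.totient n : ℝ)) - 3 / π ^ 2 * x ^ 2
        = ((∑ n ∈ Finset.Icc 1 N, (Nat.totient n : ℝ)) - 3 / π ^ 2 * (N:ℝ) ^ 2)
          - 3 / π ^ 2 * (x ^ 2 - (N:ℝ) ^ 2) := by ring
    rw [hd]
    refine le_trans (abs_sub _ _) (add_le_add hkey (le_of_eq (abs_of_nonneg (by positivity))))
  have h2x : 2 * x ≤ x * Real.log x := by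
    have h := mul_nonneg hx0.le (by linarith : (0:ℝ) ≤ Real.log x - 2)
    nlinarith [h]
  have hb1 : 2 * (N:ℝ) * (1 + Real.log N) ≤ 2 * x * (1 + Real.log x) := by
    have h1 : (0:ℝ) ≤ 1 + Real.log N := by linarith
    have := mul_le_mul (by linarith : 2 * (N:ℝ) ≤ 2 * x) (by linarith : 1 + Real.log N ≤ 1 + Real.log x) h1 (by linarith)
    linarith
  have hb2 : 2 * x * (1 + Real.log x) ≤ 3 * (x * Real.log x) := by nlinarith [h2x]
  have hb3 : 3 / π ^ 2 * (x ^ 2 - (N:ℝ) ^ 2) ≤ 2 * x := by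
    calc 3 / π ^ 2 * (x ^ 2 - (N:ℝ) ^ 2) ≤ 1 * (x ^ 2 - (N:ℝ) ^ 2) :=
          mul_le_mul_of_nonneg_right hfrac hsq0
      _ ≤ 2 * x := by linarith
  have hxlog : 0 ≤ x * Real.log x := by nlinarith [h2x]
  rw [Real.norm_eq_abs, Real.norm_eq_abs, abs_of_nonneg hxlog]
  calc |(∑ n ∈ Finset.Icc 1 N, (Nat.totient n : ℝ)) - 3 / π ^ 2 * x ^ 2|
      ≤ 2 * N * (1 + Real.log N) + 3 / π ^ 2 * (x ^ 2 - (N:ℝ) ^ 2) := hmain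
    _ ≤ 3 * (x * Real.log x) + 2 * x := by
        have := hb1.trans hb2
        linarith
    _ ≤ 10 * (x * Real.log x) := by linarith
end

section
/- For 0 < |t| < 1, the function Φ(t) = πt(1−|t|)cot(πt) + |t| satisfies 0 < Φ(t) < 1. -/
open Real

lemma key_xcos_lt_sin (x : ℝ) (hx0 : 0 < x) (hxπ : x < Real.pi) :
    x * Real.cos x < Real.sin x := by
  have hs : 0 < Real.sin x := Real.sin_pos_of_pos_of_lt_pi hx0 hxπ
  rcases le_or_gt (Real.pi / 2) x with h | h
  · have hc : Real.cos x ≤ 0 :=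
      Real.cos_nonpos_of_pi_div_two_le_of_le h (by linarith [Real.pi_pos])
    nlinarith
  · have hc : 0 < Real.cos x := Real.cos_pos_of_mem_Ioo ⟨by linarith, h⟩
    have ht := Real.lt_tan hx0 h
    rw [Real.tan_eq_sin_div_cos, lt_div_iff₀ hc] at ht
    exact ht

/-- For `0 < |t| < 1`, the function `Φ(t) = πt(1−|t|)cot(πt) + |t|` satisfies `0 < Φ(t) < 1`. -/
theorem vaalerPhi_mem_Ioo (t : ℝ) (h0 : 0 < |t|) (h1 : |t| < 1) :
    0 < Real.pi * t * (1 - |t|) * (Real.cos (Real.pi * t) / Real.sin (Real.pi * t)) + |t| ∧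
    Real.pi * t * (1 - |t|) * (Real.cos (Real.pi * t) / Real.sin (Real.pi * t)) + |t| < 1 := by
  set s := |t| with hs
  have hpi := Real.pi_pos
  have hS : 0 < Real.sin (Real.pi * s) :=
    Real.sin_pos_of_pos_of_lt_pi (by positivity) (by nlinarith)
  have hrw : Real.pi * t * (1 - s) * (Real.cos (Real.pi * t) / Real.sin (Real.pi * t))
      = Real.pi * s * (1 - s) * (Real.cos (Real.pi * s) / Real.sin (Real.pi * s)) := by
    rcases abs_cases t with ⟨he, _⟩ | ⟨he, _⟩
    · rw [hs, he]
    · have hts : t = -s := by rw [hs, he, neg_neg]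
      rw [hts]
      rw [show Real.pi * -s = -(Real.pi * s) by ring, Real.cos_neg, Real.sin_neg]
      field_simp
  rw [hrw]
  set c := Real.cos (Real.pi * s) with hc
  set S := Real.sin (Real.pi * s) with hSd
  have hs0 : 0 < s := h0
  have hs1 : s < 1 := h1
  have h2 : Real.pi * s * c < S := key_xcos_lt_sin _ (by positivity) (by nlinarith)
  have h3 : (Real.pi - Real.pi * s) * Real.cos (Real.pi - Real.pi * s)
      < Real.sin (Real.pi - Real.pi * s) :=
    key_xcos_lt_sin _ (by nlinarith) (by nlinarith)
  rw [Real.cos_pi_sub, Real.sin_pi_sub, ← hc, ← hSd] at h3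
  -- h3 : (π - π s) * (-c) < S
  constructor
  · have e1 : Real.pi * s * (1 - s) * (c / S) + s
        = s * ((Real.pi * (1 - s) * c + S) / S) := by field_simp
    rw [e1]
    have hA : 0 < Real.pi * (1 - s) * c + S := by nlinarith
    exact mul_pos hs0 (div_pos hA hS)
  · have e2 : Real.pi * s * (1 - s) * (c / S) + s
        = (Real.pi * s * (1 - s) * c + s * S) / S := by field_simp
    rw [e2, div_lt_one hS]
    nlinarith [mul_pos (by linarith : (0:ℝ) < 1 - s) (sub_pos.mpr h2)]
end
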